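/- Let x, y, s, t be integers such that x^2 + s^2 - s^4 = -t^2 and y^2 + t^2 - t^4 = -s^2. Then x = y = s = t = 0. -/
import Mathlib

lemma key_aux (x y s t : ℤ)
    (h1 : x^2 + s^2 - s^4 = -t^2) (h2 : y^2 + t^2 - t^4 = -s^2)
    (hst : t^2 ≤ s^2) : s = 0 := by
  by_contra hs
  have hs0 : s^2 ≠ 0 := pow_ne_zero _ hs
  have hs1 : 1 ≤ s^2 := lt_of_le_of_ne (sq_nonneg s) (Ne.symm hs0)
  have hcase : s^2 = 1 ∨ 4 ≤ s^2 := by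
    have h1a : 1 ≤ |s| := Int.one_le_abs (by simpa using hs)
    rcases eq_or_lt_of_le h1a with h | h
    · left; rw [← sq_abs, ← h]; ring
    · right; have : 2 ≤ |s| := h
      calc (4:ℤ) = 2 * 2 := by ring
        _ ≤ |s| * |s| := by exact mul_le_mul this this (by norm_num) (abs_nonneg s)
        _ = s^2 := by rw [← sq_abs]; ring
  rcases hcase with h | h
  · -- s^2 = 1 : x^2 + t^2 = 0, so t = 0, then y^2 = -1
    nlinarith [sq_nonneg x, sq_nonneg y, sq_nonneg t, sq_nonneg (t^2)]
  · -- s^2 ≥ 4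
    have hxu : x^2 < (s^2)^2 := by nlinarith [sq_nonneg t]
    have hxl : (s^2 - 2)^2 < x^2 := by nlinarith
    have hau : |x| < s^2 := by
      nlinarith [sq_abs x, abs_nonneg x]
    have hal : s^2 - 2 < |x| := by
      nlinarith [sq_abs x, abs_nonneg x]
    have hax : |x| = s^2 - 1 := by omega
    have hx2 : x^2 = (s^2 - 1)^2 := by rw [← sq_abs, hax]
    have ht : t^2 = s^2 - 1 := by linarith [hx2, h1, sq_nonneg x]
    have hy : y^2 = (s^2)^2 - 4*s^2 + 2 := by nlinarith [ht, h2]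
    have hz : ((y : ZMod 4))^2 = ((s : ZMod 4)^2)^2 + 2 := by
      have := congrArg (fun n : ℤ => (n : ZMod 4)) hy
      push_cast at this
      have h4 : (4 : ZMod 4) = 0 := by decide
      linear_combination this - (s:ZMod 4)^2 * h4
    have : ∀ a b : ZMod 4, a^2 ≠ (b^2)^2 + 2 := by decide
    exact this _ _ hz

theorem stmt_3 (x y s t : ℤ)
    (h1 : x^2 + s^2 - s^4 = -t^2) (h2 : y^2 + t^2 - t^4 = -s^2) :
    x = 0 ∧ y = 0 ∧ s = 0 ∧ t = 0 := by
  have hst : s = 0 ∧ t = 0 := by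
    rcases le_total (t^2) (s^2) with h | h
    · have hs := key_aux x y s t h1 h2 h
      subst hs
      have ht : t = 0 := by nlinarith [sq_nonneg t]
      exact ⟨rfl, ht⟩
    · have ht := key_aux y x t s h2 h1 h
      subst ht
      have hs : s = 0 := by nlinarith [sq_nonneg s]
      exact ⟨hs, rfl⟩
  obtain ⟨hs, ht⟩ := hst
  subst hs; subst ht
  refine ⟨?_, ?_, rfl, rfl⟩
  · nlinarith [sq_nonneg x]
  · nlinarith [sq_nonneg y]
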